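/- Let q : ℝ → ℝ be twice differentiable with q''(t) = 2 q(t)^3 + t q(t) and q(t) ≠ 0 for all t. Then r(t) = -q'(t)/q(t) satisfies r''(t) = 2 r(t)^3 - 2 t r(t) - 1. -/

import Mathlib

/-- If `q` is a nonvanishing solution of `q'' = 2q³ + tq`, then `r = -q'/q`
satisfies `r'' = 2r³ - 2tr - 1`. -/
theorem stmt_1 (q q' q'' : ℝ → ℝ)
    (hq : ∀ t, HasDerivAt q (q' t) t)
    (hq' : ∀ t, HasDerivAt q' (q'' t) t)
    (hPII : ∀ t, q'' t = 2 * q t ^ 3 + t * q t)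
    (hne : ∀ t, q t ≠ 0) :
    ∀ t, deriv (deriv (fun s => -(q' s / q s))) t =
      2 * (-(q' t / q t)) ^ 3 - 2 * t * (-(q' t / q t)) - 1 := by
  intro t
  have key : ∀ s, HasDerivAt (fun u => -(q' u / q u))
      ((q' s / q s) ^ 2 - 2 * q s ^ 2 - s) s := by
    intro s
    have h : HasDerivAt (fun u => -(q' u / q u)) (-((q'' s * q s - q' s * q' s) / q s ^ 2)) s :=
      ((hq' s).div (hq s) (hne s)).neg
    convert h using 1
    have h0 := hne s
    rw [hPII s]
    field_simp
    ring
  have hd : deriv (fun u => -(q' u / q u)) = fun s => (q' s / q s) ^ 2 - 2 * q s ^ 2 - s :=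
    funext fun s => ((key s).deriv).symm ▸ rfl
  rw [hd]
  have h2 : HasDerivAt (fun s => (q' s / q s) ^ 2 - 2 * q s ^ 2 - s)
      ((2 : ℕ) * (q' t / q t) ^ 1 * ((q'' t * q t - q' t * q' t) / q t ^ 2)
        - 2 * ((2 : ℕ) * q t ^ 1 * q' t) - 1) t := by
    exact ((((hq' t).div (hq t) (hne t)).pow 2).sub (((hq t).pow 2).const_mul 2)).sub
      (hasDerivAt_id t)
  have h0 := hne t
  rw [h2.deriv, hPII t]
  field_simp
  ring
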